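/- Let G be a finite group. Then the order superpower graph S(G) is minimally connected if and only if G is a p-group for some prime p. -/

import Mathlib

/-- The degree of a vertex: the number of its neighbours. -/
noncomputable def gDeg {V : Type*} (G : SimpleGraph V) (v : V) : ℕ :=
  (G.neighborSet v).ncard

/-- The minimum degree of a graph. -/
noncomputable def minDeg {V : Type*} (G : SimpleGraph V) : ℕ :=
  sInf (Set.range (gDeg G))

/-- The edge connectivity: the minimum size of a set of edges whose removal
disconnects the graph. -/
noncomputable def edgeConn {V : Type*} (G : SimpleGraph V) : ℕ :=
  sInf {n : ℕ | ∃ S : Set (Sym2 V), S ⊆ G.edgeSet ∧ S.ncard = n ∧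
    ¬ (G.deleteEdges S).Connected}

/-- The vertex connectivity: the minimum size of a set of vertices whose removal
disconnects the graph or leaves a single vertex. -/
noncomputable def vertexConn {V : Type*} (G : SimpleGraph V) : ℕ :=
  sInf {n : ℕ | ∃ S : Set V, S.ncard = n ∧ Sᶜ.Nonempty ∧
    (¬ (G.induce Sᶜ).Preconnected ∨ Sᶜ.ncard = 1)}

/-- A graph is minimally edge connected if deleting any edge decreases the
edge connectivity by one. -/
def MinEdgeConnected {V : Type*} (G : SimpleGraph V) : Prop :=
  ∀ e ∈ G.edgeSet, edgeConn (G.deleteEdges {e}) = edgeConn G - 1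

/-- A graph is minimally connected if deleting any edge decreases the
vertex connectivity by one. -/
def MinConnected {V : Type*} (G : SimpleGraph V) : Prop :=
  ∀ e ∈ G.edgeSet, vertexConn (G.deleteEdges {e}) = vertexConn G - 1

/-- The power graph of a group: distinct `x, y` are adjacent iff one is a
natural power of the other. -/
def powerGraph (G : Type*) [Group G] : SimpleGraph G :=
  SimpleGraph.fromRel (fun x y => ∃ m : ℕ, y = x ^ m)

/-- The enhanced power graph of a group: distinct `x, y` are adjacent iff they
lie in a common cyclic subgroup. -/
def enhancedPowerGraph (G : Type*) [Group G] : SimpleGraph G :=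
  SimpleGraph.fromRel
    (fun x y => ∃ z : G, x ∈ Subgroup.zpowers z ∧ y ∈ Subgroup.zpowers z)

/-- The order superpower graph of a group: distinct `x, y` are adjacent iff the
order of one divides the order of the other. -/
def superpowerGraph (G : Type*) [Group G] : SimpleGraph G :=
  SimpleGraph.fromRel (fun x y => orderOf x ∣ orderOf y)


open SimpleGraph Set

section GraphLemmas

variable {V : Type*} [Fintype V]

private lemma vc_le (Γ : SimpleGraph V) {S : Set V} (h1 : Sᶜ.Nonempty)
    (h2 : ¬ (Γ.induce Sᶜ).Preconnected ∨ Sᶜ.ncard = 1) :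
    vertexConn Γ ≤ S.ncard :=
  Nat.sInf_le ⟨S, rfl, h1, h2⟩

private lemma ncard_add_compl (S : Set V) : S.ncard + Sᶜ.ncard = Fintype.card V := by
  rw [← Nat.card_eq_fintype_card]; exact Set.ncard_add_ncard_compl S

private lemma reachable_transfer {W : Type*} {Γ Γ' : SimpleGraph W}
    (h : ∀ a b, Γ.Adj a b → Γ'.Reachable a b) {u v : W} (w : Γ.Walk u v) :
    Γ'.Reachable u v := by
  induction w with
  | nil => exact SimpleGraph.Reachable.refl _
  | cons hadj p ih => exact (h _ _ hadj).trans ih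

private lemma preconnected_transfer {W : Type*} {Γ Γ' : SimpleGraph W}
    (h : ∀ a b, Γ.Adj a b → Γ'.Reachable a b) (hp : Γ.Preconnected) :
    Γ'.Preconnected := fun u v => (hp u v).elim (reachable_transfer h)

private lemma walk_mem_closed {W : Type*} {Γ : SimpleGraph W} (A : Set W)
    (hA : ∀ a ∈ A, ∀ b, Γ.Adj a b → b ∈ A) {u v : W} (w : Γ.Walk u v) :
    u ∈ A → v ∈ A := by
  induction w with
  | nil => exact id
  | cons hadj p ih => exact fun hu => ih (hA _ hu _ hadj)

private lemma reachable_eq_of_no_adj {W : Type*} {Γ : SimpleGraph W}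
    (h : ∀ a b : W, ¬ Γ.Adj a b) {u v : W} (r : Γ.Reachable u v) : u = v := by
  obtain ⟨w⟩ := r
  cases w with
  | nil => rfl
  | cons h' _ => exact absurd h' (h _ _)

private lemma induce_adj_lift {Γ : SimpleGraph V} {A : Set V} {a b : A}
    (h : Γ.Adj a b) : (Γ.induce A).Adj a b := by
  simp [comap_adj, h]

private lemma induce_adj_down {Γ : SimpleGraph V} {A : Set V} {a b : A}
    (h : (Γ.induce A).Adj a b) : Γ.Adj a b := by
  simpa [comap_adj] using h

/-- The induced graph on a set of vertices of a complete graph is preconnected. -/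
private lemma induce_preconnected_of_complete {Γ : SimpleGraph V}
    (hc : ∀ a b : V, a ≠ b → Γ.Adj a b) (A : Set V) : (Γ.induce A).Preconnected := by
  rintro ⟨u, hu⟩ ⟨v, hv⟩
  rcases eq_or_ne u v with rfl | hne
  · exact SimpleGraph.Reachable.refl _
  · exact (induce_adj_lift (a := ⟨u, hu⟩) (b := ⟨v, hv⟩) (hc u v hne)).reachable

/-- The vertex connectivity of the complete graph on `n` vertices is `n - 1`. -/
private lemma vertexConn_complete (Γ : SimpleGraph V) [Nonempty V]
    (hc : ∀ a b : V, a ≠ b → Γ.Adj a b) :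
    vertexConn Γ = Fintype.card V - 1 := by
  obtain ⟨v⟩ := ‹Nonempty V›
  have hcompl : ({v}ᶜ : Set V).ncard = Fintype.card V - 1 := by
    have := ncard_add_compl ({v}ᶜ : Set V)
    rw [compl_compl, Set.ncard_singleton] at this
    omega
  have hmem : Fintype.card V - 1 ∈ {n : ℕ | ∃ S : Set V, S.ncard = n ∧ Sᶜ.Nonempty ∧
      (¬ (Γ.induce Sᶜ).Preconnected ∨ Sᶜ.ncard = 1)} := by
    refine ⟨{v}ᶜ, hcompl, ⟨v, by simp⟩, Or.inr ?_⟩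
    rw [compl_compl]; exact Set.ncard_singleton v
  refine le_antisymm (Nat.sInf_le hmem) (le_csInf ⟨_, hmem⟩ ?_)
  rintro m ⟨S, rfl, hne, h⟩
  rcases h with h | h
  · exact absurd (induce_preconnected_of_complete hc Sᶜ) h
  · have := ncard_add_compl S
    omega

private lemma sym2_ne {x y a b : V} (h1 : b ≠ x) (h2 : b ≠ y) : s(a, b) ≠ s(x, y) := by
  intro h
  rw [Sym2.eq_iff] at h
  rcases h with ⟨rfl, rfl⟩ | ⟨rfl, rfl⟩
  · exact h2 rfl
  · exact h1 rfl

private lemma sym2_ne' {x y a b : V} (h1 : a ≠ x) (h2 : a ≠ y) : s(a, b) ≠ s(x, y) := by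
  intro h
  rw [Sym2.eq_iff] at h
  rcases h with ⟨rfl, rfl⟩ | ⟨rfl, rfl⟩
  · exact h1 rfl
  · exact h2 rfl

/-- The vertex connectivity of the complete graph minus an edge is `n - 2`. -/
private lemma vertexConn_complete_deleteEdge (Γ : SimpleGraph V) {x y : V} (hxy : x ≠ y)
    (hc : ∀ a b : V, a ≠ b → Γ.Adj a b) :
    vertexConn (Γ.deleteEdges {s(x, y)}) = Fintype.card V - 2 := by
  have hpair : ({x, y} : Set V).ncard = 2 := Set.ncard_pair hxy
  have hcompl : ({x, y}ᶜ : Set V).ncard = Fintype.card V - 2 := by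
    have := ncard_add_compl ({x, y}ᶜ : Set V)
    rw [compl_compl, hpair] at this
    omega
  have hnp : ¬ ((Γ.deleteEdges {s(x, y)}).induce (({x, y}ᶜ : Set V)ᶜ)).Preconnected := by
    rw [compl_compl]
    intro hp
    have hxm : x ∈ ({x, y} : Set V) := by simp
    have hym : y ∈ ({x, y} : Set V) := by simp
    have heq := reachable_eq_of_no_adj (Γ := (Γ.deleteEdges {s(x, y)}).induce ({x, y} : Set V))
      ?_ (hp ⟨x, hxm⟩ ⟨y, hym⟩)
    · exact hxy (congrArg Subtype.val heq)
    · rintro ⟨a, ha⟩ ⟨b, hb⟩ hab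
      have hab' := induce_adj_down hab
      rw [SimpleGraph.deleteEdges_adj] at hab'
      apply hab'.2
      simp only [Set.mem_singleton_iff, Sym2.eq_iff]
      have hne := hab'.1.ne
      simp only [Set.mem_insert_iff, Set.mem_singleton_iff] at ha hb
      rcases ha with rfl | rfl <;> rcases hb with rfl | rfl <;> tauto
  have hmem : Fintype.card V - 2 ∈ {n : ℕ | ∃ S : Set V, S.ncard = n ∧ Sᶜ.Nonempty ∧
      (¬ ((Γ.deleteEdges {s(x, y)}).induce Sᶜ).Preconnected ∨ Sᶜ.ncard = 1)} := by
    refine ⟨{x, y}ᶜ, hcompl, ?_, Or.inl hnp⟩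
    rw [compl_compl]; exact ⟨x, by simp⟩
  refine le_antisymm (Nat.sInf_le hmem) (le_csInf ⟨_, hmem⟩ ?_)
  rintro m ⟨S, rfl, hne, h⟩
  rcases h with h | h
  · -- claim Sᶜ ⊆ {x, y}
    have hsub : Sᶜ ⊆ ({x, y} : Set V) := by
      intro z hz
      by_contra hzm
      simp only [Set.mem_insert_iff, Set.mem_singleton_iff, not_or] at hzm
      apply h
      have key : ∀ w, w ∈ Sᶜ → w ≠ z → (Γ.deleteEdges {s(x, y)}).Adj w z := by
        intro w hw hwz
        rw [SimpleGraph.deleteEdges_adj]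
        refine ⟨hc w z hwz, ?_⟩
        simp only [Set.mem_singleton_iff]
        intro heq
        rw [Sym2.eq_iff] at heq
        rcases heq with ⟨rfl, rfl⟩ | ⟨rfl, rfl⟩
        · exact hzm.2 rfl
        · exact hzm.1 rfl
      rintro ⟨u, hu⟩ ⟨v, hv⟩
      rcases eq_or_ne u v with rfl | huv
      · exact SimpleGraph.Reachable.refl _
      rcases eq_or_ne u z with rfl | huz
      · exact (induce_adj_lift (A := Sᶜ) (a := ⟨u, hu⟩) (b := ⟨v, hv⟩)
          ((key v hv (fun hh => huv hh.symm)).symm)).reachable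
      rcases eq_or_ne v z with rfl | hvz
      · exact (induce_adj_lift (A := Sᶜ) (a := ⟨u, hu⟩) (b := ⟨v, hv⟩) (key u hu huz)).reachable
      · exact ((induce_adj_lift (A := Sᶜ) (a := ⟨u, hu⟩) (b := ⟨z, hz⟩)
          (key u hu huz)).reachable).trans
          (induce_adj_lift (A := Sᶜ) (a := ⟨z, hz⟩) (b := ⟨v, hv⟩)
            ((key v hv hvz).symm)).reachable
    have h2 : Sᶜ.ncard ≤ 2 := hpair ▸ Set.ncard_le_ncard hsub
    have := ncard_add_compl S
    omega
  · have := ncard_add_compl S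
    omega

/-- If `x, y` are adjacent twins in a non-complete graph, deleting the edge `xy`
does not decrease the vertex connectivity. -/
private lemma twin_vertexConn_le (Γ : SimpleGraph V) {x y : V} (hadj : Γ.Adj x y)
    (htwin : ∀ z, z ≠ x → z ≠ y → (Γ.Adj x z ↔ Γ.Adj y z))
    {u0 v0 : V} (hne0 : u0 ≠ v0) (hnadj0 : ¬ Γ.Adj u0 v0) :
    vertexConn Γ ≤ vertexConn (Γ.deleteEdges {s(x, y)}) := by
  have hxy : x ≠ y := hadj.ne
  -- `vertexConn Γ ≤ card - 2` using the non-adjacent pair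
  have hS0 : vertexConn Γ ≤ Fintype.card V - 2 := by
    have hpair : ({u0, v0} : Set V).ncard = 2 := Set.ncard_pair hne0
    have hcompl : ({u0, v0}ᶜ : Set V).ncard = Fintype.card V - 2 := by
      have := ncard_add_compl ({u0, v0}ᶜ : Set V)
      rw [compl_compl, hpair] at this
      omega
    rw [← hcompl]
    refine vc_le Γ ?_ (Or.inl ?_)
    · rw [compl_compl]; exact ⟨u0, by simp⟩
    · rw [compl_compl]
      intro hp
      have hum : u0 ∈ ({u0, v0} : Set V) := by simp
      have hvm : v0 ∈ ({u0, v0} : Set V) := by simp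
      have heq := reachable_eq_of_no_adj (Γ := Γ.induce ({u0, v0} : Set V)) ?_
        (hp ⟨u0, hum⟩ ⟨v0, hvm⟩)
      · exact hne0 (congrArg Subtype.val heq)
      · rintro ⟨a, ha⟩ ⟨b, hb⟩ hab
        have hab' := induce_adj_down hab
        have hne := hab'.ne
        simp only [Set.mem_insert_iff, Set.mem_singleton_iff] at ha hb
        rcases ha with rfl | rfl <;> rcases hb with rfl | rfl
        · exact hne rfl
        · exact hnadj0 hab'
        · exact hnadj0 hab'.symm
        · exact hne rfl
  refine le_csInf ?_ ?_
  · -- the cut set of the deleted graph is nonempty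
    obtain ⟨v⟩ : Nonempty V := ⟨x⟩
    exact ⟨({v}ᶜ : Set V).ncard, {v}ᶜ, rfl, by rw [compl_compl]; exact ⟨v, rfl⟩,
      Or.inr (by rw [compl_compl]; exact Set.ncard_singleton v)⟩
  rintro m ⟨S, rfl, hne, h⟩
  rcases h with hnp | h1
  swap
  · exact vc_le Γ hne (Or.inr h1)
  by_cases hp : (Γ.induce Sᶜ).Preconnected
  swap
  · exact vc_le Γ hne (Or.inl hp)
  -- hard case
  by_cases hball : ∃ w ∈ Sᶜ, w ≠ x ∧ w ≠ y
  swap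
  · -- Sᶜ ⊆ {x, y}
    push_neg at hball
    have hsub : Sᶜ ⊆ ({x, y} : Set V) := by
      intro z hz
      rcases eq_or_ne z x with rfl | hzx
      · simp
      rcases eq_or_ne z y with rfl | hzy
      · simp
      · exact absurd (hball z hz hzx) hzy
    have h2 : Sᶜ.ncard ≤ 2 := (Set.ncard_pair hxy) ▸ Set.ncard_le_ncard hsub
    have := ncard_add_compl S
    omega
  -- x and y are both in Sᶜ
  have hmemxy : x ∈ Sᶜ ∧ y ∈ Sᶜ := by
    by_contra hcon
    apply hnp
    refine preconnected_transfer ?_ hp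
    rintro ⟨a, ha⟩ ⟨b, hb⟩ hab
    have hab' := induce_adj_down hab
    refine (induce_adj_lift (A := Sᶜ) (a := ⟨a, ha⟩) (b := ⟨b, hb⟩) ?_).reachable
    rw [SimpleGraph.deleteEdges_adj]
    refine ⟨hab', ?_⟩
    simp only [Set.mem_singleton_iff]
    intro heq
    rw [Sym2.eq_iff] at heq
    rcases heq with ⟨rfl, rfl⟩ | ⟨rfl, rfl⟩
    · exact hcon ⟨ha, hb⟩
    · exact hcon ⟨hb, ha⟩
  by_cases hz : ∃ z ∈ Sᶜ, z ≠ x ∧ z ≠ y ∧ Γ.Adj x z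
  · obtain ⟨z, hzS, hzx, hzy, hxz⟩ := hz
    have hyz : Γ.Adj y z := (htwin z hzx hzy).mp hxz
    exfalso
    apply hnp
    refine preconnected_transfer ?_ hp
    rintro ⟨a, ha⟩ ⟨b, hb⟩ hab
    have hab' := induce_adj_down hab
    by_cases he : s(a, b) = s(x, y)
    · rw [Sym2.eq_iff] at he
      have h1 : (Γ.deleteEdges {s(x, y)}).Adj a z := by
        rw [SimpleGraph.deleteEdges_adj]
        refine ⟨?_, by simpa using sym2_ne hzx hzy⟩
        rcases he with ⟨rfl, rfl⟩ | ⟨rfl, rfl⟩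
        · exact hxz
        · exact hyz
      have h2 : (Γ.deleteEdges {s(x, y)}).Adj z b := by
        rw [SimpleGraph.deleteEdges_adj]
        refine ⟨?_, by simpa using sym2_ne' hzx hzy⟩
        rcases he with ⟨rfl, rfl⟩ | ⟨rfl, rfl⟩
        · exact hyz.symm
        · exact hxz.symm
      exact ((induce_adj_lift (A := Sᶜ) (a := ⟨a, ha⟩) (b := ⟨z, hzS⟩) h1).reachable).trans
        (induce_adj_lift (A := Sᶜ) (a := ⟨z, hzS⟩) (b := ⟨b, hb⟩) h2).reachable
    · refine (induce_adj_lift (A := Sᶜ) (a := ⟨a, ha⟩) (b := ⟨b, hb⟩) ?_).reachable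
      rw [SimpleGraph.deleteEdges_adj]
      exact ⟨hab', by simpa using he⟩
  · push_neg at hz
    obtain ⟨w, hwS, hwx, hwy⟩ := hball
    exfalso
    obtain ⟨pw⟩ := hp ⟨x, hmemxy.1⟩ ⟨w, hwS⟩
    have hmem : (⟨w, hwS⟩ : ↥Sᶜ) ∈ {a : ↥Sᶜ | a.val = x ∨ a.val = y} := by
      refine walk_mem_closed _ ?_ pw (Or.inl rfl)
      rintro ⟨a, ha⟩ haA ⟨b, hb⟩ hab
      have hab' := induce_adj_down hab
      simp only [Set.mem_setOf_eq] at haA ⊢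
      by_contra hbcon
      push_neg at hbcon
      rcases haA with hax | hay
      · exact hz b hb hbcon.1 hbcon.2 (hax ▸ hab')
      · exact hz b hb hbcon.1 hbcon.2 ((htwin b hbcon.1 hbcon.2).mpr (hay ▸ hab'))
    simp only [Set.mem_setOf_eq] at hmem
    rcases hmem with hh | hh
    · exact hwx hh
    · exact hwy hh

/-- A connected graph on at least two vertices has vertex connectivity at least one. -/
private lemma one_le_vertexConn (Γ : SimpleGraph V) [Nonempty V]
    (h2 : 2 ≤ Fintype.card V) (hp : Γ.Preconnected) : 1 ≤ vertexConn Γ := by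
  obtain ⟨v⟩ := ‹Nonempty V›
  refine le_csInf ⟨({v}ᶜ : Set V).ncard, {v}ᶜ, rfl, by rw [compl_compl]; exact ⟨v, rfl⟩,
    Or.inr (by rw [compl_compl]; exact Set.ncard_singleton v)⟩ ?_
  rintro m ⟨S, rfl, hne, h⟩
  by_contra hm
  push_neg at hm
  have hS : S.ncard = 0 := by omega
  have hS0 : S = ∅ := (Set.ncard_eq_zero).mp hS
  subst hS0
  rw [Set.compl_empty] at h
  rcases h with h | h
  · apply h
    intro u v
    have := SimpleGraph.Reachable.map (Γ.induceUnivIso).symm.toHom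
      (hp (Γ.induceUnivIso u) (Γ.induceUnivIso v))
    convert this <;> exact (Γ.induceUnivIso.symm_apply_apply _).symm
  · rw [Set.ncard_univ, Nat.card_eq_fintype_card] at h
    omega

end GraphLemmas

section Superpower

variable {G : Type*} [Group G] [Fintype G]

private lemma sp_adj {a b : G} :
    (superpowerGraph G).Adj a b ↔ a ≠ b ∧ (orderOf a ∣ orderOf b ∨ orderOf b ∣ orderOf a) :=
  SimpleGraph.fromRel_adj _ a b

private lemma sp_preconnected : (superpowerGraph G).Preconnected := by
  have hone : ∀ a : G, a ≠ 1 → (superpowerGraph G).Adj 1 a := by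
    intro a ha
    rw [sp_adj]
    exact ⟨fun hh => ha hh.symm, Or.inl (by simp)⟩
  intro u v
  rcases eq_or_ne u v with rfl | huv
  · exact SimpleGraph.Reachable.refl _
  rcases eq_or_ne u 1 with rfl | hu
  · exact (hone v (fun hh => huv hh.symm)).reachable
  rcases eq_or_ne v 1 with rfl | hv
  · exact ((hone u hu).symm).reachable
  · exact ((hone u hu).symm.reachable).trans (hone v hv).reachable

private lemma sp_complete {p n : ℕ} (hp : p.Prime) (hcard : Fintype.card G = p ^ n) :
    ∀ a b : G, a ≠ b → (superpowerGraph G).Adj a b := by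
  intro a b hab
  rw [sp_adj]
  refine ⟨hab, ?_⟩
  have ha : orderOf a ∣ p ^ n := hcard ▸ orderOf_dvd_card
  have hb : orderOf b ∣ p ^ n := hcard ▸ orderOf_dvd_card
  obtain ⟨i, _, hi⟩ := (Nat.dvd_prime_pow hp).mp ha
  obtain ⟨j, _, hj⟩ := (Nat.dvd_prime_pow hp).mp hb
  rw [hi, hj]
  rcases le_total i j with hij | hij
  · exact Or.inl (pow_dvd_pow p hij)
  · exact Or.inr (pow_dvd_pow p hij)

end Superpower

/-- For a finite group `G`, the order superpower graph is minimally
connected iff `G` is a `p`-group for some prime `p`. -/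
theorem stmt_15 (G : Type*) [Group G] [Fintype G] :
    MinConnected (superpowerGraph G) ↔
      ∃ p n : ℕ, p.Prime ∧ Nat.card G = p ^ n := by
  constructor
  · intro hmin
    by_contra hcon
    push_neg at hcon
    have hcardeq : Nat.card G = Fintype.card G := Nat.card_eq_fintype_card
    set N := Fintype.card G with hN
    have hN0 : N ≠ 0 := Fintype.card_ne_zero
    have hN1 : N ≠ 1 := by
      intro h
      exact absurd (by rw [hcardeq, h]; rfl : Nat.card G = 2 ^ 0) (hcon 2 0 Nat.prime_two)
    have hpprime : N.minFac.Prime := Nat.minFac_prime hN1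
    set p := N.minFac with hpdef
    have hpd : p ∣ N := Nat.minFac_dvd N
    obtain ⟨q, hq, hqd, hqp⟩ : ∃ q, q.Prime ∧ q ∣ N ∧ q ≠ p := by
      by_contra h
      push_neg at h
      refine absurd ?_ (hcon p N.primeFactorsList.length hpprime)
      rw [hcardeq]
      exact Nat.eq_prime_pow_of_unique_prime_dvd hN0 (fun hd hdvd => h _ hd hdvd)
    -- pick the odd prime among p, q
    obtain ⟨r, hr, hrd, hr2⟩ : ∃ r, r.Prime ∧ r ∣ N ∧ r ≠ 2 := by
      rcases eq_or_ne p 2 with hp2 | hp2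
      · exact ⟨q, hq, hqd, hp2 ▸ hqp⟩
      · exact ⟨p, hpprime, hpd, hp2⟩
    haveI : Fact r.Prime := ⟨hr⟩
    obtain ⟨a, hao⟩ := exists_prime_orderOf_dvd_card r hrd
    have hane : a ≠ a⁻¹ := by
      intro h
      have h2 : a ^ 2 = 1 := by
        rw [pow_two]
        nth_rewrite 2 [h]
        exact mul_inv_cancel a
      have := orderOf_dvd_of_pow_eq_one h2
      rw [hao] at this
      exact hr2 (le_antisymm (Nat.le_of_dvd (by norm_num) this) hr.two_le)
    have hadj : (superpowerGraph G).Adj a a⁻¹ := by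
      rw [sp_adj]
      exact ⟨hane, Or.inl (by rw [orderOf_inv])⟩
    -- non-adjacent pair
    haveI : Fact p.Prime := ⟨hpprime⟩
    haveI : Fact q.Prime := ⟨hq⟩
    obtain ⟨b, hbo⟩ := exists_prime_orderOf_dvd_card p hpd
    obtain ⟨c, hco⟩ := exists_prime_orderOf_dvd_card q hqd
    have hbc : b ≠ c := by
      intro h
      rw [h, hco] at hbo
      exact hqp hbo
    have hnadj : ¬ (superpowerGraph G).Adj b c := by
      rw [sp_adj, hbo, hco]
      rintro ⟨-, hd | hd⟩
      · exact hqp ((Nat.prime_dvd_prime_iff_eq hpprime hq).mp hd).symm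
      · exact hqp ((Nat.prime_dvd_prime_iff_eq hq hpprime).mp hd)
    have htwin : ∀ z : G, z ≠ a → z ≠ a⁻¹ →
        ((superpowerGraph G).Adj a z ↔ (superpowerGraph G).Adj a⁻¹ z) := by
      intro z hza hzai
      rw [sp_adj, sp_adj, orderOf_inv]
      constructor
      · rintro ⟨-, hd⟩; exact ⟨fun hh => hzai hh.symm, hd⟩
      · rintro ⟨-, hd⟩; exact ⟨fun hh => hza hh.symm, hd⟩
    have hkey := hmin s(a, a⁻¹) ((superpowerGraph G).mem_edgeSet.mpr hadj)
    have hle := twin_vertexConn_le (superpowerGraph G) hadj htwin hbc hnadj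
    have hN2 : 2 ≤ N := by
      have := Nat.le_of_dvd (Nat.pos_of_ne_zero hN0) hpd
      have := hpprime.two_le
      omega
    have h1 := one_le_vertexConn (superpowerGraph G) hN2 sp_preconnected
    omega
  · rintro ⟨p, n, hp, hcard⟩
    intro e he
    revert he
    refine Sym2.ind (fun x y he => ?_) e
    have hadj : (superpowerGraph G).Adj x y := (superpowerGraph G).mem_edgeSet.mp he
    have hxy : x ≠ y := hadj.ne
    have hcard' : Fintype.card G = p ^ n := by rw [← Nat.card_eq_fintype_card]; exact hcard
    have hc := sp_complete hp hcard'
    haveI : Nontrivial G := ⟨x, y, hxy⟩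
    have h2 : 2 ≤ Fintype.card G := Fintype.one_lt_card
    rw [vertexConn_complete (superpowerGraph G) hc,
      vertexConn_complete_deleteEdge (superpowerGraph G) hxy hc]
    omega
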